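/- Let L = {j_1 < j_2 < ⋯ < j_s} ⊂ ℕ with s ≤ j_1, and for each j ∈ L let (I_i^j)_{i=1}^{p_j} be successive intervals with I_{p_j}^j < I_1^{j'} whenever j < j'. For x ∈ c_00(ℕ) define α_j(x) = (1/m_j) Σ_{i=1}^{p_j} ‖I_i^j x‖, where ‖·‖ is the norm induced by a norming set K that contains {±e_k*}, is closed under restriction to intervals, and is closed under the (A_{n_j}, 1/m_j) operation for each j. Then Σ_{j∈L} α_j(x) ≤ ‖x‖. -/

import Mathlib

/-- The action `f(x) = Σ_a f(e_a) x(e_a)` of a functional on a vector. -/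
def pair (f x : ℕ →₀ ℝ) : ℝ := ∑ a ∈ f.support, f a * x a

/-- The norm induced by a norming set `K` on `c₀₀(ℕ)`. -/
noncomputable def normK (K : Set (ℕ →₀ ℝ)) (x : ℕ →₀ ℝ) : ℝ :=
  sSup {r | ∃ f ∈ K, r = pair f x}

lemma pair_eq_sum (f x : ℕ →₀ ℝ) {s : Finset ℕ} (hf : f.support ⊆ s) :
    pair f x = ∑ a ∈ s, f a * x a :=
  Finset.sum_subset hf (fun a _ ha => by
    rw [Finsupp.notMem_support_iff.1 ha, zero_mul])

lemma pair_smul (c : ℝ) (f x : ℕ →₀ ℝ) : pair (c • f) x = c * pair f x := by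
  rw [pair_eq_sum (c • f) x (Finsupp.support_smul), pair, Finset.mul_sum]
  exact Finset.sum_congr rfl fun a _ => by
    rw [Finsupp.smul_apply, smul_eq_mul, mul_assoc]

lemma pair_neg (f x : ℕ →₀ ℝ) : pair (-f) x = - pair f x := by
  simpa using pair_smul (-1) f x

lemma pair_add (f g x : ℕ →₀ ℝ) : pair (f + g) x = pair f x + pair g x := by
  classical
  have h1 : (f + g).support ⊆ f.support ∪ g.support := Finsupp.support_add
  rw [pair_eq_sum (f + g) x h1,
      pair_eq_sum f x (Finset.subset_union_left (s₂ := g.support)),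
      pair_eq_sum g x (Finset.subset_union_right (s₁ := f.support)),
      ← Finset.sum_add_distrib]
  exact Finset.sum_congr rfl fun a _ => by rw [Finsupp.add_apply, add_mul]

lemma pair_sum {ι : Type*} (s : Finset ι) (F : ι → (ℕ →₀ ℝ)) (x : ℕ →₀ ℝ) :
    pair (∑ i ∈ s, F i) x = ∑ i ∈ s, pair (F i) x := by
  classical
  induction s using Finset.induction_on with
  | empty => simp [pair]
  | insert _ _ h ih => rw [Finset.sum_insert h, Finset.sum_insert h, ← ih, pair_add]

lemma pair_filter (Q : ℕ → Prop) [DecidablePred Q] (f x : ℕ →₀ ℝ) :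
    pair (f.filter Q) x = pair f (x.filter Q) := by
  rw [pair_eq_sum (f.filter Q) x (s := f.support)
        (by rw [Finsupp.support_filter]; exact Finset.filter_subset _ _), pair]
  exact Finset.sum_congr rfl fun a _ => by
    rw [Finsupp.filter_apply, Finsupp.filter_apply]
    split_ifs <;> simp

lemma sum_Icc_one (q : ℕ) (g : ℕ → ℝ) :
    ∑ i ∈ Finset.Icc 1 q, g i = ∑ i ∈ Finset.range q, g (i + 1) := by
  rw [← Finset.Ico_add_one_right_eq_Icc, Finset.sum_Ico_eq_sum_range]
  exact Finset.sum_congr rfl fun i _ => by rw [Nat.add_comm]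

/-- a family of finsupps with successive (increasing) supports -/
def OrdF (q : ℕ) (F : ℕ → (ℕ →₀ ℝ)) : Prop :=
  ∀ ⦃i i' : ℕ⦄, i < i' → i' < q → ∀ a ∈ (F i).support, ∀ b ∈ (F i').support, a < b

section core
variable {m n : ℕ → ℕ} {K : Set (ℕ →₀ ℝ)}

def IsOp (m n : ℕ → ℕ) (K : Set (ℕ →₀ ℝ)) : Prop :=
  ∀ (j d : ℕ) (f : Fin d → (ℕ →₀ ℝ)), d ≤ n j → (∀ t, f t ∈ K) →
      (∀ t t' : Fin d, t < t' → ∀ a ∈ (f t).support, ∀ b ∈ (f t').support, a < b) →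
      ((m j : ℝ))⁻¹ • ∑ t, f t ∈ K

lemma op_range (hop : IsOp m n K) (j q : ℕ) (F : ℕ → (ℕ →₀ ℝ)) (hq : q ≤ n j)
    (hK : ∀ i < q, F i ∈ K) (hOrd : OrdF q F) :
    ((m j : ℝ))⁻¹ • ∑ i ∈ Finset.range q, F i ∈ K := by
  have := hop j q (fun t : Fin q => F t) hq (fun t => hK t t.2)
    (fun t t' h a ha b hb => hOrd (Fin.lt_def.mp h) t'.2 a ha b hb)
  rwa [Fin.sum_univ_eq_sum_range] at this

lemma sum_blocks {M : Type*} [AddCommMonoid M] (B q : ℕ) (f : ℕ → M) :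
    ∑ b ∈ Finset.range B, ∑ i ∈ Finset.Ico (b * q) (b * q + q), f i
      = ∑ i ∈ Finset.range (B * q), f i := by
  induction B with
  | zero => simp
  | succ B ih =>
      rw [Finset.sum_range_succ, ih, Nat.succ_mul, Finset.sum_range_add]
      congr 1
      rw [Finset.sum_Ico_eq_sum_range]
      simp

lemma compress (hop : IsOp m n K) (j P : ℕ) (F : ℕ → (ℕ →₀ ℝ)) (U : Set ℕ)
    (hK : ∀ i < P * n j, F i ∈ K) (hOrd : OrdF (P * n j) F)
    (hU : ∀ i < P * n j, ↑(F i).support ⊆ U) :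
    ∃ G : ℕ → (ℕ →₀ ℝ), (∀ b < P, G b ∈ K) ∧ OrdF P G ∧ (∀ b < P, ↑(G b).support ⊆ U) ∧
      ∑ b ∈ Finset.range P, G b = ((m j : ℝ))⁻¹ • ∑ i ∈ Finset.range (P * n j), F i := by
  classical
  set N := n j with hN
  have hblock : ∀ b < P, b * N + N ≤ P * N := by
    intro b hb
    calc b * N + N = (b + 1) * N := by ring
      _ ≤ P * N := Nat.mul_le_mul_right N hb
  set G : ℕ → (ℕ →₀ ℝ) :=
    fun b => ((m j : ℝ))⁻¹ • ∑ i ∈ Finset.Ico (b * N) (b * N + N), F i with hG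
  have hsupp : ∀ b, (G b).support ⊆
      (Finset.Ico (b * N) (b * N + N)).biUnion (fun i => (F i).support) :=
    fun b => Finsupp.support_smul.trans Finsupp.support_finset_sum
  refine ⟨G, ?_, ?_, ?_, ?_⟩
  · intro b hb
    rw [hG]
    simp only []
    rw [Finset.sum_Ico_eq_sum_range, Nat.add_sub_cancel_left]
    exact op_range hop j N (fun i => F (b * N + i)) le_rfl
      (fun i hi => hK _ (lt_of_lt_of_le (by omega) (hblock b hb)))
      (fun i i' h h' a ha c hc =>
        hOrd (by omega) (lt_of_lt_of_le (by omega) (hblock b hb)) a ha c hc)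
  · intro b b' hbb hb' a ha c hc
    obtain ⟨i, hi, hai⟩ := Finset.mem_biUnion.mp (hsupp b ha)
    obtain ⟨i', hi', hci'⟩ := Finset.mem_biUnion.mp (hsupp b' hc)
    rw [Finset.mem_Ico] at hi hi'
    have h1 : i < i' := by
      have : b * N + N ≤ b' * N := by
        calc b * N + N = (b + 1) * N := by ring
          _ ≤ b' * N := Nat.mul_le_mul_right N hbb
      omega
    have h2 : i' < P * N := lt_of_lt_of_le hi'.2 (hblock b' hb')
    exact hOrd h1 h2 a hai c hci'
  · intro b hb a ha
    obtain ⟨i, hi, hai⟩ := Finset.mem_biUnion.mp (hsupp b ha)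
    rw [Finset.mem_Ico] at hi
    exact hU i (lt_of_lt_of_le hi.2 (hblock b hb)) hai
  · rw [← Finset.smul_sum, sum_blocks]

lemma descend {p : ℕ → ℕ} (hop : IsOp m n K)
    (hm_two : ∀ u, 1 ≤ u → 2 ≤ m u)
    (hmrec : ∀ j, 3 ≤ j → m j = (m (j - 1)) ^ 2)
    (hpstep : ∀ u, 1 ≤ u → p (u + 1) = p u * n u)
    (t : ℕ) (ht1 : 1 ≤ t) :
    ∀ j, t ≤ j → (j = t ∨ 2 ≤ t) →
      ∀ (F : ℕ → (ℕ →₀ ℝ)) (U : Set ℕ), (∀ i < p j, F i ∈ K) → OrdF (p j) F →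
        (∀ i < p j, ↑(F i).support ⊆ U) →
        ∃ G : ℕ → (ℕ →₀ ℝ), (∀ b < p t, G b ∈ K) ∧ OrdF (p t) G ∧
          (∀ b < p t, ↑(G b).support ⊆ U) ∧
          ∑ b ∈ Finset.range (p t), G b
            = ((m t : ℝ) / (m j : ℝ)) • ∑ i ∈ Finset.range (p j), F i := by
  have hmne : ∀ u, 1 ≤ u → (m u : ℝ) ≠ 0 := fun u hu =>
    Nat.cast_ne_zero.2 (by have := hm_two u hu; omega)
  have hbase : ∀ (F : ℕ → (ℕ →₀ ℝ)) (U : Set ℕ), (∀ i < p t, F i ∈ K) → OrdF (p t) F →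
      (∀ i < p t, ↑(F i).support ⊆ U) →
      ∃ G : ℕ → (ℕ →₀ ℝ), (∀ b < p t, G b ∈ K) ∧ OrdF (p t) G ∧
        (∀ b < p t, ↑(G b).support ⊆ U) ∧
        ∑ b ∈ Finset.range (p t), G b
          = ((m t : ℝ) / (m t : ℝ)) • ∑ i ∈ Finset.range (p t), F i :=
    fun F U h1 h2 h3 => ⟨F, h1, h2, h3, by rw [div_self (hmne t ht1), one_smul]⟩
  intro j htj hside
  rcases hside with rfl | ht2
  · exact hbase
  · induction j, htj using Nat.le_induction with
    | base => exact hbase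
    | succ j hj ih =>
      intro F U hK hOrd hU
      have hj1 : 1 ≤ j := by omega
      have hPN : p (j + 1) = p j * n j := hpstep j hj1
      obtain ⟨G₁, hG₁K, hG₁O, hG₁U, hG₁S⟩ :=
        compress hop j (p j) F U (hPN ▸ hK) (hPN ▸ hOrd) (hPN ▸ hU)
      obtain ⟨G, h1, h2, h3, h4⟩ := ih G₁ U hG₁K hG₁O hG₁U
      refine ⟨G, h1, h2, h3, ?_⟩
      rw [h4, hG₁S, smul_smul]
      have hmj : (m (j + 1) : ℝ) = (m j : ℝ) ^ 2 := by
        rw [hmrec (j + 1) (by omega)]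
        push_cast
        norm_num
      have h0 : (m j : ℝ) ≠ 0 := hmne j hj1
      rw [← hPN] at hG₁S ⊢
      congr 1
      rw [← div_eq_mul_inv, div_div, hmj, sq]
end core

lemma pair_le_normK {K : Set (ℕ →₀ ℝ)}
    (hbdd : ∀ y : ℕ →₀ ℝ, BddAbove {r | ∃ f ∈ K, r = pair f y}) {f : ℕ →₀ ℝ}
    (hf : f ∈ K) (x : ℕ →₀ ℝ) : pair f x ≤ normK K x :=
  le_csSup (hbdd x) ⟨f, hf, rfl⟩

lemma normK_exists {K : Set (ℕ →₀ ℝ)} (h0 : Finsupp.single 0 (1:ℝ) ∈ K)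
    (x : ℕ →₀ ℝ) {δ : ℝ} (hδ : 0 < δ) : ∃ f ∈ K, normK K x - δ < pair f x := by
  have hne : {r | ∃ f ∈ K, r = pair f x}.Nonempty := ⟨_, Finsupp.single 0 1, h0, rfl⟩
  obtain ⟨r, hrmem, hr⟩ := exists_lt_of_lt_csSup hne
    (show normK K x - δ < sSup {r | ∃ f ∈ K, r = pair f x} from sub_lt_self _ hδ)
  obtain ⟨f, hf, rfl⟩ := hrmem
  exact ⟨f, hf, hr⟩

/-- Let `L = {j_1 < ⋯ < j_s} ⊂ ℕ` with `s ≤ j_1` and, for each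
`j`, let `(I_i^j)_{i=1}^{p_j}` be successive intervals, with all intervals of
level `j` preceding all intervals of level `j'` whenever `j < j'`.  For
`x ∈ c₀₀(ℕ)` let `α_j(x) = (1/m_j) Σ_{i=1}^{p_j} ‖I_i^j x‖`, where `‖·‖` is the
norm induced by a norming set `K` containing `{±e_k*}`, closed under restriction
to intervals and closed under the `(A_{n_j}, 1/m_j)` operation for each `j`.
Then `Σ_{j ∈ L} α_j(x) ≤ ‖x‖`. -/
theorem stmt14 (m n : ℕ → ℕ) (hm1 : m 1 = 2) (hm2 : m 2 = 2)
    (hmrec : ∀ j, 3 ≤ j → m j = (m (j - 1)) ^ 2)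
    (hn1 : 2 ^ 3 * m 3 ≤ n 1)
    (hnrec : ∀ j, 2 ≤ j → (4 * n (j - 1)) ^ 5 * m j ≤ n j)
    (p : ℕ → ℕ) (hp : ∀ j, p j = ∏ i ∈ Finset.Icc 1 (j - 1), n i)
    (K : Set (ℕ →₀ ℝ))
    (hbasis : ∀ r : ℕ, Finsupp.single r (1 : ℝ) ∈ K)
    (hsym : ∀ f ∈ K, -f ∈ K)
    (hrestr : ∀ f ∈ K, ∀ a b : ℕ, f.filter (· ∈ Finset.Icc a b) ∈ K)
    (hop : ∀ (j d : ℕ) (f : Fin d → (ℕ →₀ ℝ)), d ≤ n j → (∀ t, f t ∈ K) →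
      (∀ t t' : Fin d, t < t' → ∀ a ∈ (f t).support, ∀ b ∈ (f t').support, a < b) →
      ((m j : ℝ))⁻¹ • ∑ t, f t ∈ K)
    (hbdd : ∀ x : ℕ →₀ ℝ, BddAbove {r | ∃ f ∈ K, r = pair f x})
    (I : ℕ → ℕ → Finset ℕ)
    (hint : ∀ j i, ∃ a b, I j i = Finset.Icc a b)
    (hsucc : ∀ j i i', 1 ≤ i → i < i' → i' ≤ p j → ∀ a ∈ I j i, ∀ b ∈ I j i', a < b)
    (hsucc' : ∀ j j' i i', j < j' → 1 ≤ i → i ≤ p j → 1 ≤ i' → i' ≤ p j' →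
      ∀ a ∈ I j i, ∀ b ∈ I j' i', a < b)
    (L : Finset ℕ) (hL : ∀ j ∈ L, L.card ≤ j)
    (x : ℕ →₀ ℝ) :
    ∑ j ∈ L, ((m j : ℝ))⁻¹ *
        ∑ i ∈ Finset.Icc 1 (p j), normK K (x.filter (· ∈ I j i)) ≤
      normK K x := by
  classical
  have hIsOp : IsOp m n K := hop
  -- arithmetic facts
  have hm_two : ∀ u, 1 ≤ u → 2 ≤ m u := by
    intro u
    induction u using Nat.strong_induction_on with
    | _ u ih =>
      intro hu
      by_cases h3 : 3 ≤ u
      · rw [hmrec u h3]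
        have h2 := ih (u - 1) (by omega) (by omega)
        nlinarith
      · interval_cases u
        · omega
        · omega
  have hm3 : m 3 = 4 := by
    have h := hmrec 3 (by norm_num)
    norm_num [hm2] at h
    exact h
  have hn1' : 32 ≤ n 1 := by
    rw [hm3] at hn1
    omega
  have hn_two : ∀ u, 1 ≤ u → 2 ^ u ≤ n u := by
    intro u
    induction u with
    | zero => intro h; omega
    | succ u ih =>
      intro _
      by_cases hu : 1 ≤ u
      · have h1 := ih hu
        have h2 := hnrec (u + 1) (by omega)
        simp only [Nat.add_sub_cancel] at h2
        have hm := hm_two (u + 1) (by omega)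
        have hnu : 1 ≤ n u := le_trans Nat.one_le_two_pow h1
        have h3 : 4 * n u ≤ (4 * n u) ^ 5 := Nat.le_self_pow (by norm_num) _
        have h4 : (4 * n u) * 1 ≤ (4 * n u) ^ 5 * m (u + 1) :=
          Nat.mul_le_mul h3 (by omega)
        have h5 : 2 ^ (u + 1) = 2 * 2 ^ u := by ring
        omega
      · have hu0 : u = 0 := by omega
        subst hu0
        norm_num
        omega
  have hnsq : ∀ u, 1 ≤ u → n u ^ 2 ≤ n (u + 1) := by
    intro u hu
    have h2 := hnrec (u + 1) (by omega)
    simp only [Nat.add_sub_cancel] at h2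
    have hm := hm_two (u + 1) (by omega)
    have hnu : 1 ≤ n u := le_trans Nat.one_le_two_pow (hn_two u hu)
    have c1 : n u ^ 2 ≤ (4 * n u) ^ 2 := Nat.pow_le_pow_left (by omega) 2
    have c2 : (4 * n u) ^ 2 ≤ (4 * n u) ^ 5 := Nat.pow_le_pow_right (by omega) (by omega)
    have c3 : (4 * n u) ^ 5 * 1 ≤ (4 * n u) ^ 5 * m (u + 1) :=
      Nat.mul_le_mul (le_refl _) (by omega)
    omega
  have hp1 : p 1 = 1 := by rw [hp]; simp
  have hpstep : ∀ u, 1 ≤ u → p (u + 1) = p u * n u := by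
    intro u hu
    obtain ⟨v, rfl⟩ : ∃ v, u = v + 1 := ⟨u - 1, by omega⟩
    rw [hp, hp]
    show (∏ i ∈ Finset.Icc 1 (v + 1), n i) = (∏ i ∈ Finset.Icc 1 v, n i) * n (v + 1)
    exact Finset.prod_Icc_succ_top (by omega) n
  have hple : ∀ u, 1 ≤ u → p (u + 1) ≤ n u ^ 2 := by
    intro u
    induction u with
    | zero => intro h; omega
    | succ u ih =>
      intro _
      by_cases hu : 1 ≤ u
      · have h1 := ih hu
        have h2 := hnsq u hu
        rw [hpstep (u + 1) (by omega)]
        have e1 : p (u + 1) * n (u + 1) ≤ n u ^ 2 * n (u + 1) :=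
          Nat.mul_le_mul h1 (le_refl _)
        have e2 : n u ^ 2 * n (u + 1) ≤ n (u + 1) * n (u + 1) :=
          Nat.mul_le_mul h2 (le_refl _)
        have e3 : n (u + 1) * n (u + 1) = n (u + 1) ^ 2 := (sq _).symm
        omega
      · have hu0 : u = 0 := by omega
        subst hu0
        rw [hpstep 1 le_rfl, hp1, one_mul]
        exact Nat.le_self_pow (by norm_num) _
  have hJp : ∀ u, 1 ≤ u → u * p u ≤ n u := by
    intro u hu
    by_cases h1 : u = 1
    · subst h1
      rw [hp1]
      omega
    · obtain ⟨v, rfl⟩ : ∃ v, u = v + 2 := ⟨u - 2, by omega⟩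
      have hpu : p (v + 2) ≤ n (v + 1) ^ 2 := hple (v + 1) (by omega)
      have h2 := hnrec (v + 2) (by omega)
      norm_num at h2
      have hnv : 2 ^ (v + 1) ≤ n (v + 1) := hn_two (v + 1) (by omega)
      have hnv1 : 1 ≤ n (v + 1) := le_trans Nat.one_le_two_pow hnv
      have hcard : v + 2 ≤ 2 * n (v + 1) := by
        have := Nat.lt_two_pow_self (n := v + 1)
        have hpow : 2 ^ (v + 1 + 1) = 2 * 2 ^ (v + 1) := by ring
        omega
      have hm := hm_two (v + 2) (by omega)
      calc (v + 2) * p (v + 2) ≤ (2 * n (v + 1)) * (n (v + 1) ^ 2) :=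
            Nat.mul_le_mul hcard hpu
        _ = 2 * n (v + 1) ^ 3 := by ring
        _ ≤ 2 * n (v + 1) ^ 5 :=
            Nat.mul_le_mul (le_refl 2) (Nat.pow_le_pow_right hnv1 (by omega))
        _ ≤ 1024 * n (v + 1) ^ 5 := Nat.mul_le_mul (by omega) (le_refl _)
        _ = (4 * n (v + 1)) ^ 5 := by ring
        _ = (4 * n (v + 1)) ^ 5 * 1 := (Nat.mul_one _).symm
        _ ≤ (4 * n (v + 1)) ^ 5 * m (v + 2) := Nat.mul_le_mul (le_refl _) (by omega)
        _ ≤ n (v + 2) := h2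
  -- main argument
  rcases L.eq_empty_or_nonempty with rfl | hLne
  · rw [Finset.sum_empty]
    have h1 := pair_le_normK hbdd (hbasis 0) x
    have h2 := pair_le_normK hbdd (hsym _ (hbasis 0)) x
    rw [pair_neg] at h2
    linarith
  set J := L.min' hLne with hJdef
  have hJL : J ∈ L := L.min'_mem hLne
  have hsJ : L.card ≤ J := hL J hJL
  have hs1 : 1 ≤ L.card := Finset.card_pos.2 hLne
  have hJ1 : 1 ≤ J := le_trans hs1 hsJ
  have hjge : ∀ j ∈ L, 1 ≤ j := fun j hj => le_trans hs1 (hL j hj)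
  refine le_of_forall_pos_le_add ?_
  intro ε hε
  set T : ℕ := ∑ j ∈ L, p j with hT
  set δ : ℝ := ε / ((T : ℝ) + 1) with hδdef
  have hδ : 0 < δ := by positivity
  -- choose near-optimal functionals
  have hex : ∀ j i, ∃ g ∈ K,
      normK K (x.filter (· ∈ I j (i + 1))) - δ < pair g (x.filter (· ∈ I j (i + 1))) :=
    fun j i => normK_exists (hbasis 0) _ hδ
  choose f hfK hfp using hex
  set F : ℕ → ℕ → (ℕ →₀ ℝ) := fun j i => (f j i).filter (· ∈ I j (i + 1)) with hFdef
  have hFK : ∀ j i, F j i ∈ K := by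
    intro j i
    obtain ⟨a, b, hab⟩ := hint j (i + 1)
    have h := hrestr (f j i) (hfK j i) a b
    simp only [hFdef]
    rw [hab]
    exact h
  have hFsupp : ∀ j i a, a ∈ (F j i).support → a ∈ I j (i + 1) := by
    intro j i a ha
    simp only [hFdef, Finsupp.support_filter, Finset.mem_filter] at ha
    exact ha.2
  have hFpair : ∀ j i, normK K (x.filter (· ∈ I j (i + 1))) - δ < pair (F j i) x := by
    intro j i
    simp only [hFdef]
    rw [pair_filter]
    exact hfp j i
  have hFOrd : ∀ j, OrdF (p j) (fun i => F j i) := by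
    intro j i i' hii hi' a ha b hb
    exact hsucc j (i + 1) (i' + 1) (by omega) (by omega) (by omega)
      a (hFsupp j i a ha) b (hFsupp j i' b hb)
  -- concatenation over L
  have CAT : ∀ L' : Finset ℕ, L' ⊆ L → ∃ H : ℕ → (ℕ →₀ ℝ),
      (∀ i < L'.card * p J, H i ∈ K) ∧ OrdF (L'.card * p J) H ∧
      (∀ i < L'.card * p J, ∀ a ∈ (H i).support, ∃ j ∈ L', ∃ i₀ < p j, a ∈ I j (i₀ + 1)) ∧
      ∑ i ∈ Finset.range (L'.card * p J), H i
        = ∑ j ∈ L', ((m J : ℝ) / (m j : ℝ)) • ∑ i ∈ Finset.range (p j), F j i := by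
    intro L'
    induction L' using Finset.induction_on_max with
    | empty =>
      intro _
      refine ⟨fun _ => 0, ?_, ?_, ?_, ?_⟩
      · intro i hi; simp at hi
      · intro i i' h1 h2; simp at h2
      · intro i hi; simp at hi
      · simp
    | insert jm s0 hmax ih =>
      intro hsub
      have hs0sub : s0 ⊆ L := fun y hy => hsub (Finset.mem_insert_of_mem hy)
      have hjmL : jm ∈ L := hsub (Finset.mem_insert_self _ _)
      obtain ⟨H0, hH0K, hH0O, hH0U, hH0S⟩ := ih hs0sub
      have hJjm : J ≤ jm := L.min'_le _ hjmL
      have hside : jm = J ∨ 2 ≤ J := by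
        by_cases h2 : 2 ≤ J
        · exact Or.inr h2
        · left
          have hcard : L.card ≤ 1 := le_trans hsJ (by omega)
          exact Finset.card_le_one.1 hcard jm hjmL J hJL
      obtain ⟨G, hGK, hGO, hGU', hGS⟩ := descend hIsOp hm_two hmrec hpstep J hJ1 jm hJjm hside
        (fun i => F jm i) {a | ∃ i₀, i₀ < p jm ∧ a ∈ I jm (i₀ + 1)}
        (fun i _ => hFK jm i) (hFOrd jm)
        (fun i hi a ha => ⟨i, hi, hFsupp jm i a ha⟩)
      have hnotmem : jm ∉ s0 := fun h => lt_irrefl _ (hmax _ h)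
      have hcard : (insert jm s0).card = s0.card + 1 := Finset.card_insert_of_notMem hnotmem
      set c := s0.card * p J with hc
      have hlen : (insert jm s0).card * p J = c + p J := by rw [hcard]; ring
      set H : ℕ → (ℕ →₀ ℝ) := fun i => if i < c then H0 i else G (i - c) with hHdef
      refine ⟨H, ?_, ?_, ?_, ?_⟩
      · intro i hi
        rw [hlen] at hi
        simp only [hHdef]
        by_cases h : i < c
        · rw [if_pos h]; exact hH0K i h
        · rw [if_neg h]; exact hGK (i - c) (by omega)
      · intro i i' h1 h2 a ha b hb
        rw [hlen] at h2
        simp only [hHdef] at ha hb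
        by_cases hi' : i' < c
        · rw [if_pos (lt_trans h1 hi')] at ha
          rw [if_pos hi'] at hb
          exact hH0O h1 hi' a ha b hb
        · by_cases hi : i < c
          · rw [if_pos hi] at ha
            rw [if_neg hi'] at hb
            obtain ⟨j0, hj0s, i₀, hi₀, ha'⟩ := hH0U i hi a ha
            obtain ⟨i₁, hi₁, hb'⟩ := hGU' (i' - c) (by omega) hb
            exact hsucc' j0 jm (i₀ + 1) (i₁ + 1) (hmax j0 hj0s) (by omega) (by omega)
              (by omega) (by omega) a ha' b hb'
          · rw [if_neg hi] at ha
            rw [if_neg hi'] at hb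
            exact hGO (by omega) (by omega) a ha b hb
      · intro i hi a ha
        rw [hlen] at hi
        simp only [hHdef] at ha
        by_cases h : i < c
        · rw [if_pos h] at ha
          obtain ⟨j0, hj0s, i₀, hi₀, ha'⟩ := hH0U i h a ha
          exact ⟨j0, Finset.mem_insert_of_mem hj0s, i₀, hi₀, ha'⟩
        · rw [if_neg h] at ha
          obtain ⟨i₁, hi₁, ha'⟩ := hGU' (i - c) (by omega) ha
          exact ⟨jm, Finset.mem_insert_self _ _, i₁, hi₁, ha'⟩
      · rw [hlen, Finset.sum_range_add]
        have e1 : ∑ i ∈ Finset.range c, H i = ∑ i ∈ Finset.range c, H0 i :=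
          Finset.sum_congr rfl fun i hi => by
            simp only [hHdef]; rw [if_pos (Finset.mem_range.mp hi)]
        have e2 : ∑ i ∈ Finset.range (p J), H (c + i) = ∑ i ∈ Finset.range (p J), G i :=
          Finset.sum_congr rfl fun i _ => by
            simp only [hHdef]; rw [if_neg (by omega), Nat.add_sub_cancel_left]
        rw [e1, e2, hH0S, hGS, Finset.sum_insert hnotmem, add_comm]
  -- apply the final operation
  obtain ⟨H, hHK, hHO, hHU, hHS⟩ := CAT L (Finset.Subset.refl L)
  have hq : L.card * p J ≤ n J :=
    le_trans (Nat.mul_le_mul hsJ (le_refl _)) (hJp J hJ1)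
  have hgK := op_range hIsOp J (L.card * p J) H hq hHK hHO
  have hpg := pair_le_normK hbdd hgK x
  have hcomp : pair (((m J : ℝ))⁻¹ • ∑ i ∈ Finset.range (L.card * p J), H i) x
      = ∑ j ∈ L, ((m j : ℝ))⁻¹ * ∑ i ∈ Finset.range (p j), pair (F j i) x := by
    rw [pair_smul, hHS, pair_sum, Finset.mul_sum]
    refine Finset.sum_congr rfl fun j hj => ?_
    rw [pair_smul, pair_sum]
    have hmjne : (m j : ℝ) ≠ 0 :=
      Nat.cast_ne_zero.2 (by have := hm_two j (hjge j hj); omega)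
    have hmJne : (m J : ℝ) ≠ 0 :=
      Nat.cast_ne_zero.2 (by have := hm_two J hJ1; omega)
    rw [← mul_assoc]
    congr 1
    field_simp
  -- final estimate
  have key : ∀ j ∈ L, ((m j : ℝ))⁻¹ *
      ∑ i ∈ Finset.Icc 1 (p j), normK K (x.filter (· ∈ I j i))
      ≤ ((m j : ℝ))⁻¹ * ∑ i ∈ Finset.range (p j), pair (F j i) x + (p j : ℝ) * δ := by
    intro j hj
    have hmj2 : (2 : ℝ) ≤ (m j : ℝ) := by exact_mod_cast hm_two j (hjge j hj)
    have hinv0 : (0 : ℝ) ≤ ((m j : ℝ))⁻¹ := by positivity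
    have hinv1 : ((m j : ℝ))⁻¹ ≤ 1 := by
      rw [inv_le_one_iff₀]
      right; linarith
    rw [sum_Icc_one]
    have hsumle : ∑ i ∈ Finset.range (p j), normK K (x.filter (· ∈ I j (i + 1)))
        ≤ ∑ i ∈ Finset.range (p j), pair (F j i) x + (p j : ℝ) * δ := by
      calc ∑ i ∈ Finset.range (p j), normK K (x.filter (· ∈ I j (i + 1)))
          ≤ ∑ i ∈ Finset.range (p j), (pair (F j i) x + δ) :=
            Finset.sum_le_sum fun i _ => by have := hFpair j i; linarith
        _ = ∑ i ∈ Finset.range (p j), pair (F j i) x + (p j : ℝ) * δ := by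
            rw [Finset.sum_add_distrib, Finset.sum_const, Finset.card_range,
              nsmul_eq_mul]
    calc ((m j : ℝ))⁻¹ * ∑ i ∈ Finset.range (p j), normK K (x.filter (· ∈ I j (i + 1)))
        ≤ ((m j : ℝ))⁻¹ * (∑ i ∈ Finset.range (p j), pair (F j i) x + (p j : ℝ) * δ) :=
          mul_le_mul_of_nonneg_left hsumle hinv0
      _ = ((m j : ℝ))⁻¹ * ∑ i ∈ Finset.range (p j), pair (F j i) x
            + ((m j : ℝ))⁻¹ * ((p j : ℝ) * δ) := by ring
      _ ≤ ((m j : ℝ))⁻¹ * ∑ i ∈ Finset.range (p j), pair (F j i) x + (p j : ℝ) * δ := by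
          have h1 : ((m j : ℝ))⁻¹ * ((p j : ℝ) * δ) ≤ 1 * ((p j : ℝ) * δ) :=
            mul_le_mul_of_nonneg_right hinv1 (by positivity)
          linarith
  have hTδ : (T : ℝ) * δ ≤ ε := by
    rw [hδdef]
    have hT0 : (0 : ℝ) < (T : ℝ) + 1 := by positivity
    rw [mul_div_assoc']
    rw [div_le_iff₀ hT0]
    nlinarith [hε.le, (by positivity : (0 : ℝ) ≤ (T : ℝ))]
  calc ∑ j ∈ L, ((m j : ℝ))⁻¹ *
        ∑ i ∈ Finset.Icc 1 (p j), normK K (x.filter (· ∈ I j i))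
      ≤ ∑ j ∈ L, (((m j : ℝ))⁻¹ * ∑ i ∈ Finset.range (p j), pair (F j i) x
          + (p j : ℝ) * δ) := Finset.sum_le_sum key
    _ = (∑ j ∈ L, ((m j : ℝ))⁻¹ * ∑ i ∈ Finset.range (p j), pair (F j i) x)
          + (∑ j ∈ L, (p j : ℝ)) * δ := by
        rw [Finset.sum_add_distrib, Finset.sum_mul]
    _ ≤ normK K x + (T : ℝ) * δ := by
        have h1 : ∑ j ∈ L, ((m j : ℝ))⁻¹ * ∑ i ∈ Finset.range (p j), pair (F j i) x
            ≤ normK K x := hcomp ▸ hpg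
        have h2 : (∑ j ∈ L, (p j : ℝ)) = (T : ℝ) := by
          rw [hT]; push_cast; ring
        rw [h2]
        linarith
    _ ≤ normK K x + ε := by linarith
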